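/- Let (R, M) be a commutative Noetherian local ring. Then every prime ideal of R is a direct sum of cyclic R-modules if and only if the maximal ideal M is a direct sum of (finitely many) cyclic R-modules. -/
import Mathlib


/-- An ideal `P` of a commutative ring `R` is an internal direct sum of cyclic
`R`-modules: there is a family of elements of `P` whose cyclic spans are
independent and whose supremum is `P`. -/
def IsDirectSumOfCyclics {R : Type} [CommRing R] (P : Ideal R) : Prop :=
  ∃ (ι : Type) (w : ι → R), (∀ i, w i ∈ P) ∧
    iSupIndep (fun i => Ideal.span {w i}) ∧ (⨆ i, Ideal.span {w i}) = P

theorem primes_direct_sum_iff_maximal_direct_sum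
    {R : Type} [CommRing R] [IsLocalRing R] [IsNoetherianRing R] :
    (∀ P : Ideal R, P.IsPrime → IsDirectSumOfCyclics P) ↔
      IsDirectSumOfCyclics (IsLocalRing.maximalIdeal R) := by
  constructor
  · intro h
    exact h _ (IsLocalRing.maximalIdeal.isMaximal R).isPrime
  · rintro ⟨ι, w, hmem, hindep, hsup⟩ P hP
    by_cases hall : ∀ i, w i ∈ P
    · -- then P ⊇ M, so P = M
      have hMP : IsLocalRing.maximalIdeal R ≤ P := by
        rw [← hsup]
        exact iSup_le fun i => (Ideal.span_singleton_le_iff_mem P).2 (hall i)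
      have hPM : P ≤ IsLocalRing.maximalIdeal R :=
        IsLocalRing.le_maximalIdeal hP.ne_top
      have : P = IsLocalRing.maximalIdeal R := le_antisymm hPM hMP
      rw [this]
      exact ⟨ι, w, hmem, hindep, hsup⟩
    · push_neg at hall
      obtain ⟨i0, hi0⟩ := hall
      set wi := w i0 with hwi
      -- S : iSup over j ≠ i0
      set S : Ideal R := ⨆ j : {j : ι // j ≠ i0}, Ideal.span {w j} with hS
      have hSle : ∀ j : ι, j ≠ i0 → Ideal.span {w j} ≤ S := by
        intro j hj
        exact le_iSup (fun j : {j : ι // j ≠ i0} => Ideal.span {w (j : ι)}) ⟨j, hj⟩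
      -- elements of S multiply w i0 to zero
      have hSw : ∀ s ∈ S, s * wi = 0 := by
        have hdisj : Disjoint (Ideal.span {wi}) (⨆ (j) (_ : j ≠ i0), Ideal.span {w j}) :=
          iSupIndep_def.1 hindep i0
        intro s hs
        have hs' : s ∈ ⨆ (j) (_ : j ≠ i0), Ideal.span {w j} := by
          have : S = ⨆ (j) (_ : j ≠ i0), Ideal.span {w j} := iSup_subtype
          rw [← this]; exact hs
        have h1 : s * wi ∈ Ideal.span {wi} :=
          Ideal.mul_mem_left _ s (Ideal.mem_span_singleton_self wi)
        have h2 : s * wi ∈ ⨆ (j) (_ : j ≠ i0), Ideal.span {w j} :=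
          Ideal.mul_mem_right _ _ hs'
        have := hdisj.le_bot ⟨h1, h2⟩
        simpa using this
      -- all other w j belong to P
      have hwjP : ∀ j : ι, j ≠ i0 → w j ∈ P := by
        intro j hj
        have h0 : w j * wi = 0 :=
          hSw _ (hSle j hj (Ideal.mem_span_singleton_self (w j)))
        have : w j * wi ∈ P := by rw [h0]; exact P.zero_mem
        rcases hP.mem_or_mem this with h | h
        · exact h
        · exact absurd h hi0
      have hSP : S ≤ P := iSup_le fun j =>
        (Ideal.span_singleton_le_iff_mem P).2 (hwjP j j.2)
      -- maximal ideal = S ⊔ span {wi}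
      have hM : IsLocalRing.maximalIdeal R = S ⊔ Ideal.span {wi} := by
        rw [← hsup]
        apply le_antisymm
        · apply iSup_le
          intro i
          by_cases hi : i = i0
          · subst hi; exact le_sup_of_le_right le_rfl
          · exact le_sup_of_le_left (hSle i hi)
        · apply sup_le
          · exact iSup_le fun j => le_iSup (fun i => Ideal.span {w i}) (j : ι)
          · exact le_iSup (fun i => Ideal.span {w i}) i0
      -- key: every x ∈ P lies in S + P * (wi ^ n)
      have key : ∀ x ∈ P, ∀ n : ℕ, ∃ s ∈ S, ∃ p ∈ P, x = s + p * wi ^ n := by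
        intro x hx n
        induction n with
        | zero => exact ⟨0, S.zero_mem, x, hx, by simp⟩
        | succ n ih =>
          obtain ⟨s, hs, p, hp, hxe⟩ := ih
          have hpM : p ∈ S ⊔ Ideal.span {wi} := by
            rw [← hM]; exact IsLocalRing.le_maximalIdeal hP.ne_top hp
          obtain ⟨s', hs', t, ht, hpe⟩ := Submodule.mem_sup.1 hpM
          obtain ⟨r, hr⟩ := Ideal.mem_span_singleton'.1 ht
          have hrP : r ∈ P := by
            have hrw : r * wi ∈ P := by
              have : r * wi = p - s' := by rw [hr, ← hpe]; ring
              rw [this]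
              exact P.sub_mem hp (hSP hs')
            rcases hP.mem_or_mem hrw with h | h
            · exact h
            · exact absurd h hi0
          refine ⟨s + s' * wi ^ n, ?_, r, hrP, ?_⟩
          · exact S.add_mem hs (S.mul_mem_right _ hs')
          · rw [hxe, ← hpe, ← hr]
            ring
      -- conclude P ≤ S via Krull intersection in R ⧸ S
      have hPS : P ≤ S := by
        intro x hx
        have hSne : S ≠ ⊤ := by
          intro hc
          exact hP.ne_top (top_le_iff.1 (hc ▸ hSP))
        haveI : Nontrivial (R ⧸ S) := Ideal.Quotient.nontrivial_iff.mpr hSne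
        haveI : IsLocalRing (R ⧸ S) :=
          IsLocalRing.of_surjective' (Ideal.Quotient.mk S) Ideal.Quotient.mk_surjective
        have hwtop : Ideal.span {Ideal.Quotient.mk S wi} ≠ (⊤ : Ideal (R ⧸ S)) := by
          intro hc
          have h1 : (1 : R ⧸ S) ∈ Ideal.span {Ideal.Quotient.mk S wi} := by
            rw [hc]; trivial
          obtain ⟨rb, hrb⟩ := Ideal.mem_span_singleton'.1 h1
          obtain ⟨r, rfl⟩ := Ideal.Quotient.mk_surjective rb
          have hone : (1 : R) - r * wi ∈ S := by
            rw [← Ideal.Quotient.eq_zero_iff_mem, map_sub, map_mul, hrb, map_one, sub_self]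
          have hmem1 : (1 : R) ∈ IsLocalRing.maximalIdeal R := by
            rw [hM]
            have : (1 : R) = (1 - r * wi) + r * wi := by ring
            rw [this]
            exact Submodule.add_mem _ (Ideal.mem_sup_left hone)
              (Ideal.mem_sup_right (Ideal.mul_mem_left _ r (Ideal.mem_span_singleton_self wi)))
          exact (IsLocalRing.maximalIdeal.isMaximal R).ne_top ((Ideal.eq_top_iff_one _).2 hmem1)
        have hbot := Ideal.iInf_pow_eq_bot_of_isLocalRing
          (Ideal.span {Ideal.Quotient.mk S wi}) hwtop
        have hxmem : Ideal.Quotient.mk S x ∈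
            (⨅ n : ℕ, Ideal.span {Ideal.Quotient.mk S wi} ^ n) := by
          rw [Submodule.mem_iInf]
          intro n
          obtain ⟨s, hs, p, hp, hxe⟩ := key x hx n
          rw [Ideal.span_singleton_pow]
          rw [Ideal.mem_span_singleton']
          refine ⟨Ideal.Quotient.mk S p, ?_⟩
          rw [hxe]
          have : Ideal.Quotient.mk S s = 0 := Ideal.Quotient.eq_zero_iff_mem.2 hs
          push_cast [map_add, map_mul, map_pow, this]
          ring
        rw [hbot] at hxmem
        rwa [Submodule.mem_bot, Ideal.Quotient.eq_zero_iff_mem] at hxmem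
      have hPeq : P = S := le_antisymm hPS hSP
      refine ⟨{j : ι // j ≠ i0}, fun j => w j, fun j => hwjP j j.2, ?_, ?_⟩
      · exact hindep.comp Subtype.val_injective
      · rw [hPeq, hS]
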